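/- Let 0 < η₁ < η₂ and set D₋ = [−η₂, −η₁], D₊ = [η₁, η₂], D = D₋ ∪ D₊. Let f₁ be analytic on an open complex neighborhood of D₋ and real-valued on D₋, let f₂ be analytic on an open complex neighborhood of D₊ and real-valued on D₊, and define f : D → ℝ by f = f₁ on D₋ and f = f₂ on D₊. Then there exist functions g, h : [η₁², η₂²] → ℝ, each the restriction of a function analytic on an open complex neighborhood of [η₁², η₂²], such that f(x) = g(x²) + x·h(x²) for every x ∈ D. -/
import Mathlib


/-- `f : ℝ → ℝ` restricted to `s` is the restriction of a function analytic on an open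
complex neighborhood of `s`. -/
def RestrictionOfAnalytic (f : ℝ → ℝ) (s : Set ℝ) : Prop :=
  ∃ (F : ℂ → ℂ) (U : Set ℂ), IsOpen U ∧ (Complex.ofReal '' s) ⊆ U ∧
    AnalyticOnNhd ℂ F U ∧ ∀ x ∈ s, F x = (f x : ℂ)

/-- The analytic branch of the square root used below. -/
noncomputable def cSqrt (z : ℂ) : ℂ := Complex.exp (Complex.log z / 2)

lemma cSqrt_analyticAt {z : ℂ} (hz : z ∈ Complex.slitPlane) : AnalyticAt ℂ cSqrt z := by
  exact AnalyticAt.cexp (((analyticAt_clog hz).div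
    analyticAt_const (by norm_num)))

lemma cSqrt_ofReal {t : ℝ} (ht : 0 < t) : cSqrt (t : ℂ) = (Real.sqrt t : ℂ) := by
  rw [cSqrt, ← Complex.ofReal_log ht.le]
  have : ((Real.log t : ℂ)) / 2 = ((Real.log t / 2 : ℝ) : ℂ) := by push_cast; ring
  rw [this, ← Complex.ofReal_exp]
  congr 1
  rw [Real.sqrt_eq_rpow, Real.rpow_def_of_pos ht]
  ring_nf

lemma cSqrt_ne_zero (z : ℂ) : cSqrt z ≠ 0 := Complex.exp_ne_zero _

/-- A function `f` on `D = [-η₂, -η₁] ∪ [η₁, η₂]` which is (piecewise) the restriction of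
functions analytic near each component decomposes as `f(x) = g(x²) + x h(x²)` with
`g`, `h` restrictions of functions analytic near `[η₁², η₂²]`. -/
theorem even_odd_analytic_decomposition
    (η₁ η₂ : ℝ) (hη₁ : 0 < η₁) (hη₂ : η₁ < η₂) (f : ℝ → ℝ)
    (hf₁ : RestrictionOfAnalytic f (Set.Icc (-η₂) (-η₁)))
    (hf₂ : RestrictionOfAnalytic f (Set.Icc η₁ η₂)) :
    ∃ g h : ℝ → ℝ,
      RestrictionOfAnalytic g (Set.Icc (η₁ ^ 2) (η₂ ^ 2)) ∧
      RestrictionOfAnalytic h (Set.Icc (η₁ ^ 2) (η₂ ^ 2)) ∧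
      ∀ x ∈ Set.Icc (-η₂) (-η₁) ∪ Set.Icc η₁ η₂,
        f x = g (x ^ 2) + x * h (x ^ 2) := by
  obtain ⟨F₁, U₁, hU₁o, hU₁s, hF₁a, hF₁e⟩ := hf₁
  obtain ⟨F₂, U₂, hU₂o, hU₂s, hF₂a, hF₂e⟩ := hf₂
  -- the real candidates
  set g : ℝ → ℝ := fun t => (f (Real.sqrt t) + f (-Real.sqrt t)) / 2 with hg
  set h : ℝ → ℝ := fun t => (f (Real.sqrt t) - f (-Real.sqrt t)) / (2 * Real.sqrt t) with hh
  -- the complex candidates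
  set G : ℂ → ℂ := fun z => (F₂ (cSqrt z) + F₁ (-cSqrt z)) / 2 with hG
  set H : ℂ → ℂ := fun z => (F₂ (cSqrt z) - F₁ (-cSqrt z)) / (2 * cSqrt z) with hH
  set U : Set ℂ := {z | z ∈ Complex.slitPlane ∧ cSqrt z ∈ U₂ ∧ -cSqrt z ∈ U₁} with hU
  have hUopen : IsOpen U := by
    rw [isOpen_iff_mem_nhds]
    rintro z ⟨hz1, hz2, hz3⟩
    have hc : ContinuousAt cSqrt z := (cSqrt_analyticAt hz1).continuousAt
    have h1 : Complex.slitPlane ∈ nhds z := Complex.isOpen_slitPlane.mem_nhds hz1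
    have h2 : cSqrt ⁻¹' U₂ ∈ nhds z := hc.preimage_mem_nhds (hU₂o.mem_nhds hz2)
    have h3 : (fun z => -cSqrt z) ⁻¹' U₁ ∈ nhds z :=
      (hc.neg).preimage_mem_nhds (hU₁o.mem_nhds hz3)
    filter_upwards [h1, h2, h3] with w hw1 hw2 hw3
    exact ⟨hw1, hw2, hw3⟩
  -- key: membership of real points
  have hmemIcc : ∀ t ∈ Set.Icc (η₁ ^ 2) (η₂ ^ 2), Real.sqrt t ∈ Set.Icc η₁ η₂ := by
    rintro t ⟨ht1, ht2⟩
    constructor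
    · have := Real.sqrt_le_sqrt ht1
      rwa [Real.sqrt_sq hη₁.le] at this
    · have := Real.sqrt_le_sqrt ht2
      rwa [Real.sqrt_sq (hη₁.trans hη₂).le] at this
  have hmemU : (Complex.ofReal '' Set.Icc (η₁ ^ 2) (η₂ ^ 2)) ⊆ U := by
    rintro _ ⟨t, ht, rfl⟩
    have htpos : 0 < t := lt_of_lt_of_le (pow_pos hη₁ 2) ht.1
    have hs := hmemIcc t ht
    refine ⟨Complex.ofReal_mem_slitPlane.2 htpos, ?_, ?_⟩
    · rw [cSqrt_ofReal htpos]
      exact hU₂s ⟨Real.sqrt t, hs, rfl⟩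
    · rw [cSqrt_ofReal htpos, ← Complex.ofReal_neg]
      exact hU₁s ⟨-Real.sqrt t, ⟨by linarith [hs.2], by linarith [hs.1]⟩, rfl⟩
  have haux : ∀ z ∈ U, AnalyticAt ℂ (fun z => F₂ (cSqrt z)) z ∧
      AnalyticAt ℂ (fun z => F₁ (-cSqrt z)) z := by
    rintro z ⟨hz1, hz2, hz3⟩
    have hs := cSqrt_analyticAt hz1
    have hneg : AnalyticAt ℂ (fun w => -cSqrt w) z := hs.neg
    exact ⟨(hF₂a _ hz2).comp hs,
      AnalyticAt.comp (f := fun w => -cSqrt w) (hF₁a _ hz3) hneg⟩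
  have hGa : AnalyticOnNhd ℂ G U := by
    intro z hz
    obtain ⟨h2, h1⟩ := haux z hz
    exact (h2.add h1).div analyticAt_const (by norm_num)
  have hHa : AnalyticOnNhd ℂ H U := by
    intro z hz
    obtain ⟨h2, h1⟩ := haux z hz
    exact (h2.sub h1).div (analyticAt_const.mul (cSqrt_analyticAt hz.1)) (by
      simp [cSqrt_ne_zero])
  have hGe : ∀ t ∈ Set.Icc (η₁ ^ 2) (η₂ ^ 2), G t = (g t : ℂ) := by
    intro t ht
    have htpos : 0 < t := lt_of_lt_of_le (pow_pos hη₁ 2) ht.1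
    have hs := hmemIcc t ht
    rw [hG]
    simp only [cSqrt_ofReal htpos, ← Complex.ofReal_neg]
    rw [hF₂e _ hs, hF₁e _ ⟨by linarith [hs.2], by linarith [hs.1]⟩]
    push_cast [hg]
    ring
  have hHe : ∀ t ∈ Set.Icc (η₁ ^ 2) (η₂ ^ 2), H t = (h t : ℂ) := by
    intro t ht
    have htpos : 0 < t := lt_of_lt_of_le (pow_pos hη₁ 2) ht.1
    have hs := hmemIcc t ht
    have hsp : (0:ℝ) < Real.sqrt t := lt_of_lt_of_le hη₁ hs.1
    rw [hH]
    simp only [cSqrt_ofReal htpos, ← Complex.ofReal_neg]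
    rw [hF₂e _ hs, hF₁e _ ⟨by linarith [hs.2], by linarith [hs.1]⟩]
    rw [hh]
    push_cast
    ring
  refine ⟨g, h, ⟨G, U, hUopen, hmemU, hGa, hGe⟩, ⟨H, U, hUopen, hmemU, hHa, hHe⟩, ?_⟩
  rintro x (hx | hx)
  · have hxneg : x < 0 := lt_of_le_of_lt hx.2 (by linarith)
    have hsq : Real.sqrt (x ^ 2) = -x := by
      rw [show x ^ 2 = (-x) ^ 2 by ring, Real.sqrt_sq (by linarith)]
    simp only [hg, hh, hsq]
    have hx0 : x ≠ 0 := ne_of_lt hxneg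
    field_simp
    ring
  · have hxpos : 0 < x := lt_of_lt_of_le hη₁ hx.1
    have hsq : Real.sqrt (x ^ 2) = x := Real.sqrt_sq hxpos.le
    simp only [hg, hh, hsq]
    have hx0 : x ≠ 0 := ne_of_gt hxpos
    field_simp
    ring
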